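/- The function u(x,t) = a₀ − a₀ tanh(x − c t)² with c = (45a + 15λ a₀ − 8α a₀²)/45 satisfies the Gardner-Kawahara equation u_t + a u_x + λ u u_x − α u² u_x + μ u_xxx + β u_xxxxx = 0, where β = α a₀²/360 and μ = (3λ a₀ − 2α a₀²)/36. -/

import Mathlib

open Real

lemma tanh_hasDerivAt' (y : ℝ) : HasDerivAt Real.tanh (1 - Real.tanh y ^ 2) y := by
  have hc : Real.cosh y ≠ 0 := (Real.cosh_pos y).ne'
  have h : HasDerivAt (fun z => Real.sinh z / Real.cosh z)
      ((Real.cosh y * Real.cosh y - Real.sinh y * Real.sinh y) / Real.cosh y ^ 2) y :=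
    (Real.hasDerivAt_sinh y).div (Real.hasDerivAt_cosh y) hc
  have he : (fun z => Real.sinh z / Real.cosh z) = Real.tanh := by
    funext z; rw [Real.tanh_eq_sinh_div_cosh]
  rw [he] at h
  convert h using 1
  rw [Real.tanh_eq_sinh_div_cosh]
  have h1 : Real.cosh y ^ 2 - Real.sinh y ^ 2 = 1 := Real.cosh_sq_sub_sinh_sq y
  field_simp

/-- derivative of an odd/even polynomial in tanh -/
lemma tanh_poly_hasDerivAt (c0 c1 c2 c3 c4 c5 c6 c7 : ℝ) (y : ℝ) :
    HasDerivAt (fun y => c0 + c1 * Real.tanh y + c2 * Real.tanh y ^ 2 + c3 * Real.tanh y ^ 3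
        + c4 * Real.tanh y ^ 4 + c5 * Real.tanh y ^ 5 + c6 * Real.tanh y ^ 6
        + c7 * Real.tanh y ^ 7)
      ((c1 + 2 * c2 * Real.tanh y + 3 * c3 * Real.tanh y ^ 2 + 4 * c4 * Real.tanh y ^ 3
        + 5 * c5 * Real.tanh y ^ 4 + 6 * c6 * Real.tanh y ^ 5 + 7 * c7 * Real.tanh y ^ 6)
        * (1 - Real.tanh y ^ 2)) y := by
  have ht := tanh_hasDerivAt' y
  have h := (((((((hasDerivAt_const y c0).add (ht.const_mul c1)).add
    ((ht.pow 2).const_mul c2)).add ((ht.pow 3).const_mul c3)).add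
    ((ht.pow 4).const_mul c4)).add ((ht.pow 5).const_mul c5)).add
    ((ht.pow 6).const_mul c6)).add ((ht.pow 7).const_mul c7)
  refine h.congr_deriv ?_
  push_cast
  ring

lemma deriv_shift (F F' : ℝ → ℝ) (hF : ∀ y, HasDerivAt F (F' y) y) (s : ℝ) :
    deriv (fun x' => F (x' - s)) = fun x' => F' (x' - s) := by
  funext x
  have h : HasDerivAt (fun x' => F (x' - s)) (F' (x - s) * 1) x :=
    (hF (x - s)).comp x ((hasDerivAt_id x).sub_const s)
  simpa using h.deriv

/-- The tanh-squared solution (Set 3) of the Gardner-Kawahara equation. -/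
theorem gardner_kawahara_tanh_solution_set3
    (a lam alpha a0 : ℝ)
    (c beta mu : ℝ)
    (hc : c = (45 * a + 15 * lam * a0 - 8 * alpha * a0 ^ 2) / 45)
    (hbeta : beta = alpha * a0 ^ 2 / 360)
    (hmu : mu = (3 * lam * a0 - 2 * alpha * a0 ^ 2) / 36)
    (u : ℝ → ℝ → ℝ)
    (hu : ∀ x t, u x t = a0 - a0 * (Real.tanh (x - c * t)) ^ 2) :
    ∀ x t : ℝ,
      deriv (fun t' => u x t') t + a * deriv (fun x' => u x' t) x
        + lam * u x t * deriv (fun x' => u x' t) x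
        - alpha * (u x t) ^ 2 * deriv (fun x' => u x' t) x
        + mu * iteratedDeriv 3 (fun x' => u x' t) x
        + beta * iteratedDeriv 5 (fun x' => u x' t) x = 0 := by
  intro x t
  -- the profile F and its derivatives F1..F5 as polynomials in tanh
  set F : ℝ → ℝ := fun y => a0 - a0 * Real.tanh y ^ 2 with hF
  set F1 : ℝ → ℝ := fun y => -2 * a0 * Real.tanh y + 2 * a0 * Real.tanh y ^ 3 with hF1
  set F2 : ℝ → ℝ := fun y => -2 * a0 + 8 * a0 * Real.tanh y ^ 2 - 6 * a0 * Real.tanh y ^ 4 with hF2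
  set F3 : ℝ → ℝ := fun y => 16 * a0 * Real.tanh y - 40 * a0 * Real.tanh y ^ 3
      + 24 * a0 * Real.tanh y ^ 5 with hF3
  set F4 : ℝ → ℝ := fun y => 16 * a0 - 136 * a0 * Real.tanh y ^ 2 + 240 * a0 * Real.tanh y ^ 4
      - 120 * a0 * Real.tanh y ^ 6 with hF4
  set F5 : ℝ → ℝ := fun y => -272 * a0 * Real.tanh y + 1232 * a0 * Real.tanh y ^ 3
      - 1680 * a0 * Real.tanh y ^ 5 + 720 * a0 * Real.tanh y ^ 7 with hF5
  have hd0 : ∀ y, HasDerivAt F (F1 y) y := by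
    intro y
    have h := tanh_poly_hasDerivAt a0 0 (-a0) 0 0 0 0 0 y
    convert h using 1 <;> first | (funext z; ring) | (simp only [hF1]; ring)
  have hd1 : ∀ y, HasDerivAt F1 (F2 y) y := by
    intro y
    have h := tanh_poly_hasDerivAt 0 (-2 * a0) 0 (2 * a0) 0 0 0 0 y
    convert h using 1 <;> first | (funext z; ring) | (simp only [hF2]; ring)
  have hd2 : ∀ y, HasDerivAt F2 (F3 y) y := by
    intro y
    have h := tanh_poly_hasDerivAt (-2 * a0) 0 (8 * a0) 0 (-6 * a0) 0 0 0 y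
    convert h using 1 <;> first | (funext z; ring) | (simp only [hF3]; ring)
  have hd3 : ∀ y, HasDerivAt F3 (F4 y) y := by
    intro y
    have h := tanh_poly_hasDerivAt 0 (16 * a0) 0 (-40 * a0) 0 (24 * a0) 0 0 y
    convert h using 1 <;> first | (funext z; ring) | (simp only [hF4]; ring)
  have hd4 : ∀ y, HasDerivAt F4 (F5 y) y := by
    intro y
    have h := tanh_poly_hasDerivAt (16 * a0) 0 (-136 * a0) 0 (240 * a0) 0 (-120 * a0) 0 y
    convert h using 1 <;> first | (funext z; ring) | (simp only [hF5]; ring)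
  -- spatial function
  have hux : (fun x' => u x' t) = fun x' => F (x' - c * t) := by
    funext x'; rw [hu]
  have hD1 : deriv (fun x' => u x' t) = fun x' => F1 (x' - c * t) := by
    rw [hux]; exact deriv_shift F F1 hd0 (c * t)
  have hD2 : deriv (fun x' => F1 (x' - c * t)) = fun x' => F2 (x' - c * t) :=
    deriv_shift F1 F2 hd1 (c * t)
  have hD3 : deriv (fun x' => F2 (x' - c * t)) = fun x' => F3 (x' - c * t) :=
    deriv_shift F2 F3 hd2 (c * t)
  have hD4 : deriv (fun x' => F3 (x' - c * t)) = fun x' => F4 (x' - c * t) :=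
    deriv_shift F3 F4 hd3 (c * t)
  have hD5 : deriv (fun x' => F4 (x' - c * t)) = fun x' => F5 (x' - c * t) :=
    deriv_shift F4 F5 hd4 (c * t)
  have hI3 : iteratedDeriv 3 (fun x' => u x' t) x = F3 (x - c * t) := by
    rw [show (3 : ℕ) = 2 + 1 from rfl, iteratedDeriv_succ,
        show (2 : ℕ) = 1 + 1 from rfl, iteratedDeriv_succ, iteratedDeriv_one,
        hD1, hD2, hD3]
  have hI5 : iteratedDeriv 5 (fun x' => u x' t) x = F5 (x - c * t) := by
    rw [show (5 : ℕ) = 4 + 1 from rfl, iteratedDeriv_succ,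
        show (4 : ℕ) = 3 + 1 from rfl, iteratedDeriv_succ,
        show (3 : ℕ) = 2 + 1 from rfl, iteratedDeriv_succ,
        show (2 : ℕ) = 1 + 1 from rfl, iteratedDeriv_succ, iteratedDeriv_one,
        hD1, hD2, hD3, hD4, hD5]
  -- time derivative
  have hut : deriv (fun t' => u x t') t = -c * F1 (x - c * t) := by
    have hinner : HasDerivAt (fun t' : ℝ => x - c * t') (0 - c * 1) t :=
      (hasDerivAt_const t x).sub ((hasDerivAt_id t).const_mul c)
    have h : HasDerivAt (fun t' => F (x - c * t')) (F1 (x - c * t) * (0 - c * 1)) t :=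
      HasDerivAt.comp (h₂ := F) t (hd0 (x - c * t)) hinner
    have he : (fun t' => u x t') = fun t' => F (x - c * t') := by
      funext t'; rw [hu]
    rw [he, h.deriv]; ring
  rw [hut, hI3, hI5, hu, hD1]
  simp only [hF, hF1, hF3, hF5]
  subst hc hbeta hmu
  ring
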